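/- Suppose EA_p(z_1; z_2,…,z_n) = z_2 with z_1,…,z_n pairwise distinct finite complex numbers none of which is a root of p. Then the partial derivative ∂EA_p(z_1; z_2,…,z_n)/∂z_2 evaluated at this point equals -1. -/

import Mathlib

open Finset

lemma prod_hasDerivAt {k : ℕ} (c : Fin k → ℂ) (z : ℂ) (hc : ∀ j, z - c j ≠ 0) :
    HasDerivAt (fun x => ∏ j, (x - c j))
      ((∏ j, (z - c j)) * ∑ j, (z - c j)⁻¹) z := by
  have h := HasDerivAt.fun_finsetProd (u := Finset.univ) (f := fun j x => x - c j)
    (f' := fun _ => (1 : ℂ)) (x := z)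
    (fun i _ => (hasDerivAt_id z).sub_const (c i))
  convert h using 1
  · rfl
  · rfl
  rw [Finset.mul_sum]
  refine Finset.sum_congr rfl fun i _ => ?_
  rw [smul_eq_mul, mul_one, ← Finset.prod_erase_mul Finset.univ _ (Finset.mem_univ i)]
  rw [mul_assoc, mul_inv_cancel₀ (hc i), mul_one]


/-- `q(x) = p(x)/∏_j (x - w j)` where `p(x) = ∏_j (x - α j)` is monic of degree
`m + 1` and `w` lists the companion coordinates `z₂, …, z_n` (`n = m + 1`). -/
noncomputable def eaQ (m : ℕ) (α : Fin (m + 1) → ℂ) (w : Fin m → ℂ) : ℂ → ℂ :=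
  fun x => (∏ j, (x - α j)) / ∏ j, (x - w j)

/-- The Ehrlich–Aberth step `EA_p(z₁; w) = z₁ - q(z₁)/q'(z₁)`. -/
noncomputable def eaStep (m : ℕ) (α : Fin (m + 1) → ℂ) (z₁ : ℂ) (w : Fin m → ℂ) : ℂ :=
  z₁ - eaQ m α w z₁ / deriv (eaQ m α w) z₁

lemma eaStep_closed (m : ℕ) (α : Fin (m + 1) → ℂ) (z₁ : ℂ) (w : Fin m → ℂ)
    (hα : ∀ j, z₁ ≠ α j) (hw : ∀ j, z₁ ≠ w j) :
    eaStep m α z₁ w = z₁ - ((∑ j, (z₁ - α j)⁻¹) - ∑ j, (z₁ - w j)⁻¹)⁻¹ := by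
  have hα' : ∀ j, z₁ - α j ≠ 0 := fun j => sub_ne_zero.2 (hα j)
  have hw' : ∀ j, z₁ - w j ≠ 0 := fun j => sub_ne_zero.2 (hw j)
  set P := ∏ j, (z₁ - α j) with hP
  set Q := ∏ j, (z₁ - w j) with hQ
  set SA := ∑ j, (z₁ - α j)⁻¹ with hSA
  set SW := ∑ j, (z₁ - w j)⁻¹ with hSW
  have hPne : P ≠ 0 := Finset.prod_ne_zero_iff.2 fun j _ => hα' j
  have hQne : Q ≠ 0 := Finset.prod_ne_zero_iff.2 fun j _ => hw' j
  have hnum := prod_hasDerivAt α z₁ hα'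
  have hden := prod_hasDerivAt w z₁ hw'
  have hq : HasDerivAt (eaQ m α w)
      ((P * SA * Q - P * (Q * SW)) / Q ^ 2) z₁ := hnum.div hden hQne
  have hd : deriv (eaQ m α w) z₁ = (P * SA * Q - P * (Q * SW)) / Q ^ 2 := hq.deriv
  have hval : eaQ m α w z₁ = P / Q := rfl
  rw [eaStep, hd, hval]
  rcases eq_or_ne (SA - SW) 0 with h | h
  · have : P * SA * Q - P * (Q * SW) = 0 := by
      have : SA = SW := sub_eq_zero.1 h
      rw [this]; ring
    rw [this, h, zero_div, div_zero, inv_zero]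
  · congr 1
    have hfac : P * SA * Q - P * (Q * SW) = P * Q * (SA - SW) := by ring
    have h2 : P * Q * (SA - SW) / Q ^ 2 = P / Q * (SA - SW) := by
      field_simp
    rw [hfac, h2, div_mul_cancel_left₀ (div_ne_zero hPne hQne)]

/-- If `EA_p(z₁; z₂,…,z_n) = z₂` with `z₁,…,z_n` pairwise distinct finite complex
numbers, none of which is a root of `p`, then `∂EA_p(z₁; z₂,…,z_n)/∂z₂ = -1`
at this point. -/
theorem stmt13 (m : ℕ) (hm : 0 < m) (α : Fin (m + 1) → ℂ) (z₁ : ℂ) (w : Fin m → ℂ)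
    (hw : Function.Injective w) (hz₁w : ∀ j, z₁ ≠ w j)
    (hz₁ : ∀ j, z₁ ≠ α j) (hwα : ∀ i j, w i ≠ α j)
    (hEA : eaStep m α z₁ w = w ⟨0, hm⟩) :
    deriv (fun t => eaStep m α z₁ (Function.update w ⟨0, hm⟩ t)) (w ⟨0, hm⟩) = -1 := by
  set i0 : Fin m := ⟨0, hm⟩
  set t₀ := w i0 with ht₀
  have hz₁t : z₁ - t₀ ≠ 0 := sub_ne_zero.2 (hz₁w i0)
  set A := ∑ j, (z₁ - α j)⁻¹ with hA
  set B := ∑ j ∈ Finset.univ.erase i0, (z₁ - w j)⁻¹ with hB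
  set C := A - B with hC
  have hsum : ∀ t : ℂ, ∑ j, (z₁ - Function.update w i0 t j)⁻¹ = (z₁ - t)⁻¹ + B := by
    intro t
    rw [← Finset.sum_erase_add _ _ (Finset.mem_univ i0), Function.update_self, add_comm]
    congr 1
    refine Finset.sum_congr rfl fun j hj => ?_
    rw [Function.update_of_ne (Finset.ne_of_mem_erase hj)]
  have hstep : ∀ t : ℂ, z₁ ≠ t →
      eaStep m α z₁ (Function.update w i0 t) = z₁ - (C - (z₁ - t)⁻¹)⁻¹ := by
    intro t ht
    rw [eaStep_closed m α z₁ _ hz₁ ?_]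
    · rw [hsum t]
      congr 2
      ring
    · intro j
      rcases eq_or_ne j i0 with rfl | hj
      · rwa [Function.update_self]
      · rw [Function.update_of_ne hj]; exact hz₁w j
  have hev : (fun t => eaStep m α z₁ (Function.update w i0 t)) =ᶠ[nhds t₀]
      fun t => z₁ - (C - (z₁ - t)⁻¹)⁻¹ := by
    filter_upwards [eventually_ne_nhds (Ne.symm (hz₁w i0))] with t ht
    exact hstep t ht.symm
  rw [hev.deriv_eq]
  have hfix : z₁ - (C - (z₁ - t₀)⁻¹)⁻¹ = t₀ := by
    have h := hstep t₀ (hz₁w i0)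
    rw [Function.update_eq_self] at h
    rw [← h]; exact hEA
  set D := C - (z₁ - t₀)⁻¹ with hDdef
  have hDinv : D⁻¹ = z₁ - t₀ := by rw [← hfix]; ring
  have hDne : D ≠ 0 := by
    intro h0; rw [h0, inv_zero] at hDinv; exact hz₁t hDinv.symm
  have hD : D = (z₁ - t₀)⁻¹ := by rw [← hDinv, inv_inv]
  have h1 : HasDerivAt (fun t : ℂ => z₁ - t) (-1) t₀ := by
    simpa using (hasDerivAt_id t₀).const_sub z₁
  have h2 := h1.inv hz₁t
  have h3 := h2.const_sub C
  have h4 := h3.inv hDne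
  have h5 := h4.const_sub z₁
  have h6 : HasDerivAt (fun t => z₁ - (C - (z₁ - t)⁻¹)⁻¹) (-(- -(- -1 / (z₁ - t₀) ^ 2) / (C - (z₁ - t₀)⁻¹) ^ 2)) t₀ := h5
  rw [h6.deriv, ← hDdef, hD]
  field_simp
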